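/- Let (X₁,X₂) be bivariate Student-t with ν > 0 degrees of freedom and correlation ρ ∈ (−1,1). Then the conditional probability P[X₁ ≤ x_p | X₂ = x_p], where x_p = T_ν⁻¹(p), equals T_{ν+1}(k(p)) with k(p) = √(ν+1)·(x_p − ρx_p)/√((1−ρ²)(ν + x_p²)); here T_ν denotes the univariate Student-t cdf with ν degrees of freedom. -/

import Mathlib

open MeasureTheory Real

/-- Univariate Student-t density with `ν` degrees of freedom. -/
noncomputable def studentDensity (ν x : ℝ) : ℝ :=
  Real.Gamma ((ν + 1) / 2) / (Real.sqrt (ν * π) * Real.Gamma (ν / 2)) *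
    (1 + x ^ 2 / ν) ^ (-((ν + 1) / 2))

/-- Univariate Student-t cdf with `ν` degrees of freedom. -/
noncomputable def studentCdf (ν x : ℝ) : ℝ :=
  ∫ t in Set.Iic x, studentDensity ν t

/-- Bivariate Student-t density with `ν` degrees of freedom and correlation `ρ`. -/
noncomputable def studentDensity2 (ν ρ x₁ x₂ : ℝ) : ℝ :=
  Real.Gamma ((ν + 2) / 2) / (Real.Gamma (ν / 2) * ν * π * Real.sqrt (1 - ρ ^ 2)) *
    (1 + (x₁ ^ 2 - 2 * ρ * x₁ * x₂ + x₂ ^ 2) / (ν * (1 - ρ ^ 2))) ^ (-((ν + 2) / 2))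

lemma studentDensity_pos {ν x : ℝ} (hν : 0 < ν) : 0 < studentDensity ν x := by
  have hA : 0 < 1 + x ^ 2 / ν := by positivity
  have h1 : 0 < Real.Gamma ((ν + 1) / 2) := Real.Gamma_pos_of_pos (by linarith)
  have h2 : 0 < Real.Gamma (ν / 2) := Real.Gamma_pos_of_pos (by linarith)
  have h3 : 0 < Real.sqrt (ν * π) := Real.sqrt_pos.2 (by positivity)
  unfold studentDensity
  positivity

lemma key (ν ρ xp x : ℝ) (hν : 0 < ν) (hρ₁ : -1 < ρ) (hρ₂ : ρ < 1) :
    studentDensity2 ν ρ x xp =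
      studentDensity ν xp *
        ((Real.sqrt ((1 - ρ ^ 2) * (ν + xp ^ 2)) / Real.sqrt (ν + 1))⁻¹ *
          studentDensity (ν + 1)
            ((x - ρ * xp) / (Real.sqrt ((1 - ρ ^ 2) * (ν + xp ^ 2)) / Real.sqrt (ν + 1)))) := by
  have hρ : 0 < 1 - ρ ^ 2 := by nlinarith
  have hD : 0 < (1 - ρ ^ 2) * (ν + xp ^ 2) := by positivity
  set s : ℝ := Real.sqrt ((1 - ρ ^ 2) * (ν + xp ^ 2)) / Real.sqrt (ν + 1) with hs_def
  have hs : 0 < s := by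
    apply div_pos (Real.sqrt_pos.2 hD) (Real.sqrt_pos.2 (by linarith))
  set u : ℝ := (x - ρ * xp) / s with hu_def
  have hA : 0 < 1 + xp ^ 2 / ν := by positivity
  have hB : 0 < 1 + u ^ 2 / (ν + 1) := by positivity
  have hs2 : s ^ 2 = (1 - ρ ^ 2) * (ν + xp ^ 2) / (ν + 1) := by
    rw [hs_def, div_pow, Real.sq_sqrt hD.le, Real.sq_sqrt (by linarith : (0:ℝ) ≤ ν + 1)]
  have hu2 : u ^ 2 * ((1 - ρ ^ 2) * (ν + xp ^ 2)) = (x - ρ * xp) ^ 2 * (ν + 1) := by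
    rw [hu_def, div_pow, hs2]
    field_simp
  have hAB : 1 + (x ^ 2 - 2 * ρ * x * xp + xp ^ 2) / (ν * (1 - ρ ^ 2)) =
      (1 + xp ^ 2 / ν) * (1 + u ^ 2 / (ν + 1)) := by
    have hu2' : u ^ 2 = (x - ρ * xp) ^ 2 * (ν + 1) / ((1 - ρ ^ 2) * (ν + xp ^ 2)) := by
      rw [eq_div_iff hD.ne']; exact hu2
    rw [hu2']
    field_simp
    try ring
  unfold studentDensity2 studentDensity
  rw [hAB, Real.mul_rpow hA.le hB.le]
  have hsplit : (1 + xp ^ 2 / ν) ^ (-((ν + 2) / 2)) =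
      (1 + xp ^ 2 / ν) ^ (-((ν + 1) / 2)) * (1 + xp ^ 2 / ν) ^ (-(1 / 2 : ℝ)) := by
    rw [← Real.rpow_add hA]; ring_nf
  rw [hsplit]
  have hhalf : (1 + xp ^ 2 / ν) ^ (-(1 / 2 : ℝ)) = (Real.sqrt (1 + xp ^ 2 / ν))⁻¹ := by
    rw [Real.rpow_neg hA.le, Real.sqrt_eq_rpow]
  rw [hhalf]
  have hAeq : 1 + xp ^ 2 / ν = (ν + xp ^ 2) / ν := by field_simp
  have hexp2 : (ν + 1 + 1) / 2 = (ν + 2) / 2 := by ring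
  rw [hAeq, Real.sqrt_div (by positivity) ν, hexp2]
  have hν1 : (0:ℝ) < ν + 1 := by linarith
  have h0 : Real.Gamma (ν / 2) ≠ 0 := (Real.Gamma_pos_of_pos (by linarith)).ne'
  have h1 : Real.Gamma ((ν + 1) / 2) ≠ 0 := (Real.Gamma_pos_of_pos (by linarith)).ne'
  have hsπ : Real.sqrt π ≠ 0 := (Real.sqrt_pos.2 Real.pi_pos).ne'
  have hsν : Real.sqrt ν ≠ 0 := (Real.sqrt_pos.2 hν).ne'
  have hsν1 : Real.sqrt (ν + 1) ≠ 0 := (Real.sqrt_pos.2 hν1).ne'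
  have hsρ : Real.sqrt (1 - ρ ^ 2) ≠ 0 := (Real.sqrt_pos.2 hρ).ne'
  have hsx : Real.sqrt (ν + xp ^ 2) ≠ 0 := (Real.sqrt_pos.2 (by positivity)).ne'
  rw [hs_def, Real.sqrt_mul hν.le, Real.sqrt_mul hν1.le, Real.sqrt_mul hρ.le]
  have hπ : π ≠ 0 := Real.pi_pos.ne'
  field_simp
  ring_nf
  rw [Real.sq_sqrt hν.le, Real.sq_sqrt Real.pi_pos.le]

/-- For a bivariate Student-t pair with `ν` degrees of freedom and correlation `ρ`,
the conditional probability `P[X₁ ≤ x_p | X₂ = x_p]`, with `x_p = T_ν⁻¹(p)`, equals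
`T_{ν+1}(k(p))` where `k(p) = √(ν+1)·(x_p - ρ x_p)/√((1-ρ²)(ν + x_p²))`. -/
theorem stmt_14 (ν ρ p xp : ℝ) (hν : 0 < ν) (hρ₁ : -1 < ρ) (hρ₂ : ρ < 1)
    (hp : p ∈ Set.Ioo (0 : ℝ) 1) (hxp : studentCdf ν xp = p) :
    (∫ x₁ in Set.Iic xp, studentDensity2 ν ρ x₁ xp) / studentDensity ν xp =
      studentCdf (ν + 1)
        (Real.sqrt (ν + 1) * (xp - ρ * xp) / Real.sqrt ((1 - ρ ^ 2) * (ν + xp ^ 2))) := by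
  have hρ : 0 < 1 - ρ ^ 2 := by nlinarith
  have hD : 0 < (1 - ρ ^ 2) * (ν + xp ^ 2) := by positivity
  set s : ℝ := Real.sqrt ((1 - ρ ^ 2) * (ν + xp ^ 2)) / Real.sqrt (ν + 1) with hs_def
  have hs : 0 < s :=
    div_pos (Real.sqrt_pos.2 hD) (Real.sqrt_pos.2 (by linarith))
  set k : ℝ := (xp - ρ * xp) / s with hk_def
  have hk : Real.sqrt (ν + 1) * (xp - ρ * xp) / Real.sqrt ((1 - ρ ^ 2) * (ν + xp ^ 2)) = k := by
    rw [hk_def, hs_def, div_div_eq_mul_div, mul_comm]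
  rw [hk]
  have hpt : ∀ x : ℝ, studentDensity2 ν ρ x xp =
      studentDensity ν xp * s⁻¹ * studentDensity (ν + 1) ((x - ρ * xp) / s) := by
    intro x
    rw [key ν ρ xp x hν hρ₁ hρ₂, ← hs_def, mul_assoc]
  have h1 : (∫ x₁ in Set.Iic xp, studentDensity2 ν ρ x₁ xp) =
      studentDensity ν xp * s⁻¹ *
        ∫ x in Set.Iic xp, studentDensity (ν + 1) ((x - ρ * xp) / s) := by
    simp_rw [hpt]
    exact integral_const_mul _ _
  have h2 : (∫ x in Set.Iic xp, studentDensity (ν + 1) ((x - ρ * xp) / s)) =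
      s * studentCdf (ν + 1) k := by
    rw [← integral_indicator measurableSet_Iic]
    have hind : ∀ x : ℝ, (Set.Iic xp).indicator
        (fun x => studentDensity (ν + 1) ((x - ρ * xp) / s)) x =
        (Set.Iic k).indicator (studentDensity (ν + 1)) ((x - ρ * xp) / s) := by
      intro x
      have hiff : (x - ρ * xp) / s ≤ k ↔ x ≤ xp := by
        rw [hk_def, div_le_div_iff_of_pos_right hs]
        constructor <;> intro <;> linarith
      by_cases hx : x ≤ xp
      · rw [Set.indicator_of_mem (Set.mem_Iic.mpr hx),
          Set.indicator_of_mem (Set.mem_Iic.mpr (hiff.mpr hx))]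
      · rw [Set.indicator_of_notMem (fun h => hx (Set.mem_Iic.mp h)),
          Set.indicator_of_notMem (fun h => hx (hiff.mp (Set.mem_Iic.mp h)))]
    simp_rw [hind]
    have h3 : (∫ x : ℝ, (Set.Iic k).indicator (studentDensity (ν + 1)) ((x - ρ * xp) / s)) =
        ∫ x : ℝ, (Set.Iic k).indicator (studentDensity (ν + 1)) (x / s) := by
      simpa [sub_eq_add_neg] using
        integral_add_right_eq_self
          (fun x => (Set.Iic k).indicator (studentDensity (ν + 1)) (x / s)) (-(ρ * xp))
    rw [h3, MeasureTheory.Measure.integral_comp_div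
      (fun x => (Set.Iic k).indicator (studentDensity (ν + 1)) x) s,
      abs_of_pos hs, integral_indicator measurableSet_Iic]
    simp [studentCdf, smul_eq_mul]
  rw [h1, h2]
  have hd : studentDensity ν xp ≠ 0 := (studentDensity_pos hν).ne'
  field_simp
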